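/- Let a ≥ 1 and k ≥ 1 be integers, ℓ ≥ 0 an integer, and t_1, …, t_k nonnegative integers with t_1 ≥ 1, t_k ≥ 1 and t_1 + ⋯ + t_k ≥ 2. Let ν be the tuple consisting of t_1 copies of a, followed by t_2 copies of 2a, …, followed by t_k copies of ka, and let M be the number of tuples m of nonnegative integers (with the same number of entries as ν) such that ∑_j ν_j·m_j = ℓ. If a does not divide ℓ, then M = 0. If a divides ℓ, write L = ℓ/a; then M = ∑ f_1(i_1) · ∏_{r=2}^k g_r(i_r), where the sum runs over all k-tuples (i_1, …, i_k) of nonnegative integers satisfying ∑_{r=1}^k r·i_r ≤ L, i_1 = 0 whenever t_1 = 1, and i_r = 0 whenever t_r = 0 (2 ≤ r ≤ k); here f_1(i_1) = C(i_1 + t_1 − 2, t_1 − 2) if t_1 ≥ 2 and f_1(i_1) = 1 if t_1 = 1, and g_r(i_r) = C(i_r + t_r − 1, t_r − 1) if t_r ≥ 1 and g_r(i_r) = 1 if t_r = 0. -/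

import Mathlib

open Finset

lemma sum_multichoose (n s : ℕ) :
    ∑ u ∈ range (s + 1), Nat.multichoose n u = Nat.multichoose (n + 1) s := by
  induction s with
  | zero => simp
  | succ s ih => rw [Finset.sum_range_succ, ih, Nat.multichoose_succ_succ, Nat.add_comm]

lemma card_comp : ∀ (n : ℕ), ∀ (s B : ℕ), s ≤ B →
    (((Fintype.piFinset fun _ : Fin n => Finset.range (B + 1))).filter
      (fun c => ∑ j, c j = s)).card = Nat.multichoose n s := by
  intro n
  induction n with
  | zero =>
    intro s B _
    rcases s with _ | s
    · rw [Finset.filter_true_of_mem (by simp)]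
      simp
    · rw [Finset.filter_false_of_mem (by simp)]
      simp [Nat.multichoose_zero_succ]
  | succ n ih =>
    intro s B hB
    rw [Finset.card_eq_sum_card_fiberwise (f := fun c => c 0) (t := Finset.range (s + 1))
      (by
        intro c hc
        simp only [Finset.mem_coe, Finset.mem_filter] at hc
        have := Finset.single_le_sum (f := fun j => c j) (fun _ _ => Nat.zero_le _)
          (Finset.mem_univ (0 : Fin (n+1)))
        rw [hc.2] at this
        simpa using Nat.lt_succ_of_le this)]
    have key : ∀ v ∈ Finset.range (s + 1),
        ((((Fintype.piFinset fun _ : Fin (n+1) => Finset.range (B + 1))).filter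
          (fun c => ∑ j, c j = s)).filter (fun c => c 0 = v)).card
        = Nat.multichoose n (s - v) := by
      intro v hv
      rw [Finset.mem_range] at hv
      have hv' : v ≤ s := Nat.lt_succ_iff.mp hv
      rw [← ih (s - v) B (le_trans (Nat.sub_le _ _) hB)]
      apply Finset.card_nbij' (i := fun c => Fin.tail c) (j := fun c => Fin.cons v c)
      · intro c hc
        simp only [Finset.mem_coe, Finset.mem_filter, Fintype.mem_piFinset] at hc ⊢
        obtain ⟨⟨h1, h2⟩, h3⟩ := hc
        refine ⟨fun j => h1 _, ?_⟩
        have hs := (Fin.sum_univ_succ c).symm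
        rw [h2] at hs
        simp only [Fin.tail]
        omega
      · intro c hc
        simp only [Finset.mem_coe, Finset.mem_filter, Fintype.mem_piFinset, Finset.mem_range] at hc ⊢
        obtain ⟨h1, h2⟩ := hc
        refine ⟨⟨?_, ?_⟩, by simp⟩
        · intro j
          refine Fin.cases ?_ ?_ j <;> simp [Finset.mem_range]
          · omega
          · intro i; exact Nat.lt_succ_iff.mp (h1 i)
        · rw [Fin.sum_univ_succ]
          simp [h2]
          omega
      · intro c hc
        have h3 := (Finset.mem_filter.mp hc).2
        have h4 := Fin.cons_self_tail c
        rw [h3] at h4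
        exact h4
      · intro c _; simp [Fin.tail_cons]
    rw [Finset.sum_congr rfl key]
    rw [← sum_multichoose n s]
    rw [← Finset.sum_range_reflect (fun u => Nat.multichoose n u) (s+1)]
    apply Finset.sum_congr rfl
    intro v hv
    norm_num

lemma card_comp' (γ : Type) [Fintype γ] [DecidableEq γ] (s B : ℕ) (h : s ≤ B) :
    (((Fintype.piFinset fun _ : γ => Finset.range (B + 1))).filter
      (fun c => ∑ j, c j = s)).card = Nat.multichoose (Fintype.card γ) s := by
  rw [← card_comp (Fintype.card γ) s B h]
  have e := Fintype.equivFin γ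
  apply Finset.card_nbij' (i := fun c => c ∘ e.symm) (j := fun c => c ∘ e)
  · intro c hc
    simp only [Finset.mem_coe, Finset.mem_filter, Fintype.mem_piFinset] at hc ⊢
    exact ⟨fun j => hc.1 _, by rw [← hc.2]; exact Fintype.sum_equiv e.symm _ _ (fun _ => rfl)⟩
  · intro c hc
    simp only [Finset.mem_coe, Finset.mem_filter, Fintype.mem_piFinset] at hc ⊢
    exact ⟨fun j => hc.1 _, by rw [← hc.2]; exact Fintype.sum_equiv e _ _ (fun _ => rfl)⟩
  · intro c _; ext x; simp
  · intro c _; ext x; simp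

lemma card_partition {α β : Type} [Fintype α] [DecidableEq α] [Fintype β] [DecidableEq β]
    (f : α → β) (B : ℕ) (p : β → ℕ) :
    ((Fintype.piFinset fun _ : α => Finset.range (B + 1)).filter
      (fun m => ∀ b, ∑ a ∈ Finset.univ.filter (fun a => f a = b), m a = p b)).card
    = ∏ b, ((Fintype.piFinset fun _ : {x // f x = b} => Finset.range (B + 1)).filter
        (fun c => ∑ x, c x = p b)).card := by
  rw [← Fintype.card_piFinset]
  apply Finset.card_nbij' (i := fun m b x => m x.1) (j := fun g a => g (f a) ⟨a, rfl⟩)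
  · intro m hm
    simp only [Finset.mem_coe, Finset.mem_filter, Fintype.mem_piFinset] at hm ⊢
    intro b
    refine ⟨fun x => hm.1 x.1, ?_⟩
    rw [← hm.2 b]
    exact (Finset.sum_subtype _ (by simp) _).symm
  · intro g hg
    simp only [Finset.mem_coe, Finset.mem_filter, Fintype.mem_piFinset] at hg ⊢
    constructor
    · intro a
      exact (hg (f a)).1 ⟨a, rfl⟩
    · intro b
      rw [← (hg b).2]
      rw [Finset.sum_subtype _ (by simp : ∀ x, x ∈ Finset.univ.filter (fun a => f a = b) ↔ f x = b)
        (fun a => g (f a) ⟨a, rfl⟩)]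
      apply Finset.sum_congr rfl
      intro x _
      obtain ⟨x, hx⟩ := x
      subst hx
      rfl
  · intro m _; rfl
  · intro g _
    funext b c
    obtain ⟨x, hx⟩ := c
    subst hx
    rfl

variable {k : ℕ} (t : Fin k → ℕ)

def Pf (r : Fin k) : ℕ := ∑ s : Fin k, if s ≤ r then t s else 0
def Qf (r : Fin k) : ℕ := ∑ s : Fin k, if s < r then t s else 0

lemma Pf_eq (r : Fin k) : Pf t r = Qf t r + t r := by
  unfold Pf Qf
  have hterm : ∀ s : Fin k, s ∈ Finset.univ → (if s ≤ r then t s else 0)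
      = (if s < r then t s else 0) + (if s = r then t s else 0) := by
    intro s _
    rcases lt_trichotomy s r with h | h | h
    · simp [le_of_lt h, h, ne_of_lt h]
    · subst h; simp
    · simp [not_le_of_gt h, not_lt_of_gt h, (ne_of_lt h).symm]
  rw [Finset.sum_congr rfl hterm, Finset.sum_add_distrib]
  simp

lemma Pf_mono {r r' : Fin k} (h : r ≤ r') : Pf t r ≤ Pf t r' := by
  apply Finset.sum_le_sum
  intro s _
  split
  · rw [if_pos (le_trans (by assumption) h)]
  · exact Nat.zero_le _

lemma Pf_le_Qf {r r' : Fin k} (h : r < r') : Pf t r ≤ Qf t r' := by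
  apply Finset.sum_le_sum
  intro s _
  split
  · rw [if_pos (lt_of_le_of_lt (by assumption) h)]
  · exact Nat.zero_le _

lemma Qf_le_Pf (r : Fin k) : Qf t r ≤ Pf t r := by
  apply Finset.sum_le_sum
  intro s _
  split
  · rw [if_pos (le_of_lt (by assumption))]
  · exact Nat.zero_le _

lemma Pf_last (hk : 0 < k) : Pf t ⟨k - 1, by omega⟩ = ∑ r, t r := by
  apply Finset.sum_congr rfl
  intro s _
  rw [if_pos]
  rw [Fin.le_def]
  exact Nat.le_sub_one_of_lt s.2

lemma Pf_pos (hk : 0 < k) (ht1 : 1 ≤ t ⟨0, hk⟩) (r : Fin k) : 0 < Pf t r := by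
  have h := Finset.single_le_sum (f := fun s : Fin k => if s ≤ r then t s else 0)
    (fun _ _ => Nat.zero_le _) (Finset.mem_univ ⟨0, hk⟩)
  have h' : (if (⟨0, hk⟩ : Fin k) ≤ r then t ⟨0, hk⟩ else 0) ≤ Pf t r := h
  rw [if_pos (by rw [Fin.le_def]; exact Nat.zero_le _)] at h'
  exact lt_of_lt_of_le ht1 h'

lemma Qf_zero_val (r : Fin k) (h : r.1 = 0) : Qf t r = 0 := by
  apply Finset.sum_eq_zero
  intro s _
  rw [if_neg]
  rw [Fin.lt_def, h]
  omega

lemma Qf_eq_Pf_pred (r r' : Fin k) (h : r.1 = r'.1 + 1) : Qf t r = Pf t r' := by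
  apply Finset.sum_congr rfl
  intro s _
  congr 1
  rw [Fin.lt_def, Fin.le_def, h]
  simp [Nat.lt_succ_iff]

lemma ridx_nonempty (hk : 0 < k) (j : ℕ) (hj : j < ∑ r, t r) :
    (Finset.univ.filter fun r => j < Pf t r).Nonempty :=
  ⟨⟨k - 1, by omega⟩, by simp [Finset.mem_filter, Pf_last t hk, hj]⟩

def ridx (hk : 0 < k) (j : ℕ) (hj : j < ∑ r, t r) : Fin k :=
  (Finset.univ.filter fun r => j < Pf t r).min' (ridx_nonempty t hk j hj)

lemma lt_Pf_ridx (hk : 0 < k) (j : ℕ) (hj : j < ∑ r, t r) : j < Pf t (ridx t hk j hj) := by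
  have := Finset.min'_mem _ (ridx_nonempty t hk j hj)
  exact (Finset.mem_filter.mp this).2

lemma ridx_min (hk : 0 < k) (j : ℕ) (hj : j < ∑ r, t r) (r : Fin k) (h : j < Pf t r) :
    ridx t hk j hj ≤ r := by
  unfold ridx
  exact Finset.min'_le (Finset.univ.filter fun r => j < Pf t r) r
    (Finset.mem_filter.mpr ⟨Finset.mem_univ _, h⟩)

lemma Pf_le_of_lt_ridx (hk : 0 < k) (j : ℕ) (hj : j < ∑ r, t r) (r : Fin k)
    (h : r < ridx t hk j hj) : Pf t r ≤ j := by
  by_contra hc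
  exact absurd (ridx_min t hk j hj r (by omega)) (not_le_of_gt h)

lemma Qf_ridx_le (hk : 0 < k) (j : ℕ) (hj : j < ∑ r, t r) : Qf t (ridx t hk j hj) ≤ j := by
  set r := ridx t hk j hj with hr
  rcases Nat.eq_zero_or_eq_succ_pred r.1 with h | h
  · rw [Qf_zero_val t r h]; exact Nat.zero_le _
  · have hlt : r.1 - 1 < k := by omega
    have hpos : 0 < r.1 := by omega
    rw [Qf_eq_Pf_pred t r ⟨r.1 - 1, hlt⟩ (by simp; omega)]
    apply Pf_le_of_lt_ridx
    rw [Fin.lt_def]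
    show r.1 - 1 < r.1
    omega

lemma filter_Pf_card (hk : 0 < k) (j : ℕ) (hj : j < ∑ r, t r) :
    (Finset.univ.filter fun r => Pf t r ≤ j).card = (ridx t hk j hj).1 := by
  have : (Finset.univ.filter fun r => Pf t r ≤ j) = Finset.Iio (ridx t hk j hj) := by
    ext r
    simp only [Finset.mem_filter, Finset.mem_univ, true_and, Finset.mem_Iio]
    constructor
    · intro h
      by_contra hc
      push_neg at hc
      exact absurd (le_trans (lt_Pf_ridx t hk j hj) (Pf_mono t hc)) (by omega)
    · exact Pf_le_of_lt_ridx t hk j hj r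
  rw [this, Fin.card_Iio]

lemma ridx_eq_iff (hk : 0 < k) (j : ℕ) (hj : j < ∑ r, t r) (r : Fin k) :
    ridx t hk j hj = r ↔ Qf t r ≤ j ∧ j < Pf t r := by
  constructor
  · rintro rfl
    exact ⟨Qf_ridx_le t hk j hj, lt_Pf_ridx t hk j hj⟩
  · rintro ⟨hQ, hP⟩
    have h1 : ridx t hk j hj ≤ r := ridx_min t hk j hj r hP
    rcases lt_or_eq_of_le h1 with h | h
    · exact absurd (le_trans (Pf_le_Qf t h) hQ) (not_le_of_gt (lt_Pf_ridx t hk j hj))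
    · exact h

lemma card_block (hk : 0 < k) (r : Fin k) :
    (Finset.univ.filter fun j : Fin (∑ r, t r) => ridx t hk j.1 j.2 = r).card = t r := by
  have hPN : Pf t r ≤ ∑ r, t r := by
    rw [← Pf_last t hk]
    exact Pf_mono t (by rw [Fin.le_def]; exact Nat.le_sub_one_of_lt r.2)
  have : (Finset.univ.filter fun j : Fin (∑ r, t r) => ridx t hk j.1 j.2 = r).card
      = (Finset.Ico (Qf t r) (Pf t r)).card := by
    apply Finset.card_nbij (i := fun j => j.1)
    · intro j hj
      simp only [Finset.mem_coe, Finset.mem_filter, Finset.mem_univ, true_and] at hj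
      rw [ridx_eq_iff] at hj
      simp only [Finset.mem_coe, Finset.mem_Ico]
      exact hj
    · intro j1 h1 j2 h2 h
      exact Fin.val_injective h
    · intro x hx
      simp only [Finset.coe_Ico, Set.mem_Ico] at hx
      have hxN : x < ∑ r, t r := lt_of_lt_of_le hx.2 hPN
      refine ⟨⟨x, hxN⟩, ?_, rfl⟩
      simp only [Finset.coe_filter, Set.mem_setOf_eq, Finset.mem_univ, true_and]
      rw [ridx_eq_iff]
      exact hx
  rw [this, Nat.card_Ico, Pf_eq]
  omega

theorem stmt_12 (a k ℓ : ℕ) (ha : 1 ≤ a) (hk : 1 ≤ k)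
    (t : Fin k → ℕ) (ht1 : 1 ≤ t ⟨0, hk⟩) (htk : 1 ≤ t ⟨k - 1, by omega⟩)
    (htsum : 2 ≤ ∑ r, t r) :
    let N : ℕ := ∑ r, t r
    let ν : Fin N → ℕ := fun j =>
      a * ((Finset.univ.filter (fun r : Fin k =>
        (∑ s : Fin k, if s ≤ r then t s else 0) ≤ (j : ℕ))).card + 1)
    let M : ℕ := ((Fintype.piFinset fun _ : Fin N => Finset.range (ℓ + 1)).filter
      (fun m => ∑ j, ν j * m j = ℓ)).card
    (¬ a ∣ ℓ → M = 0) ∧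
    (∀ L : ℕ, ℓ = a * L →
      M = ∑ i ∈ (Fintype.piFinset fun _ : Fin k => Finset.range (L + 1)).filter
            (fun i => (∑ r : Fin k, ((r : ℕ) + 1) * i r) ≤ L ∧
              (t ⟨0, hk⟩ = 1 → i ⟨0, hk⟩ = 0) ∧
              (∀ r : Fin k, r ≠ ⟨0, hk⟩ → t r = 0 → i r = 0)),
          (if t ⟨0, hk⟩ = 1 then 1 else
            Nat.choose (i ⟨0, hk⟩ + t ⟨0, hk⟩ - 2) (t ⟨0, hk⟩ - 2)) *
          ∏ r ∈ Finset.univ.erase ⟨0, hk⟩,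
            (if t r = 0 then 1 else Nat.choose (i r + t r - 1) (t r - 1))) := by
  intro N ν M
  have hk0 : 0 < k := hk
  have hN0 : 0 < N := by show 0 < ∑ r, t r; omega
  -- weight function
  set w : Fin N → ℕ := fun j => (ridx t hk0 j.1 j.2).1 + 1 with hwdef
  have hν : ∀ j : Fin N, ν j = a * w j := by
    intro j
    show a * ((Finset.univ.filter (fun r : Fin k =>
        (∑ s : Fin k, if s ≤ r then t s else 0) ≤ (j : ℕ))).card + 1) = a * w j
    have hcard : (Finset.univ.filter (fun r : Fin k =>
        (∑ s : Fin k, if s ≤ r then t s else 0) ≤ (j : ℕ))).card = (ridx t hk0 j.1 j.2).1 :=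
      filter_Pf_card t hk0 j.1 j.2
    rw [hcard]
  have hfac : ∀ m : Fin N → ℕ, ∑ j, ν j * m j = a * ∑ j, w j * m j := by
    intro m
    rw [Finset.mul_sum]
    exact Finset.sum_congr rfl fun j _ => by rw [hν j, Nat.mul_assoc]
  constructor
  · -- divisibility part
    intro hdvd
    have hempty : ∀ m ∈ Fintype.piFinset (fun _ : Fin N => Finset.range (ℓ + 1)),
        ¬ (∑ j, ν j * m j = ℓ) := by
      intro m _ hm
      exact hdvd ⟨∑ j, w j * m j, by rw [← hm, hfac m]⟩
    show (Finset.filter _ _).card = 0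
    rw [Finset.filter_false_of_mem hempty, Finset.card_empty]
  · -- main part
    intro L hL
    have hLl : L ≤ ℓ := by
      rw [hL]; exact Nat.le_mul_of_pos_left L ha
    -- designated position and fiber map
    have hj0N : (0 : ℕ) < N := hN0
    set j₀ : Fin N := ⟨0, hj0N⟩ with hj0def
    set r₀ : Fin k := ⟨0, hk⟩ with hr0def
    set f : Fin N → Option (Fin k) :=
      fun j => if j = j₀ then none else some (ridx t hk0 j.1 j.2) with hfdef
    set φ : (Fin N → ℕ) → (Fin k → ℕ) :=
      fun m r => ∑ j ∈ Finset.univ.filter (fun j => f j = some r), m j with hφdef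
    have hr0 : ridx t hk0 j₀.1 j₀.2 = r₀ := by
      rw [ridx_eq_iff]
      constructor
      · rw [Qf_zero_val t r₀ rfl]
      · exact Pf_pos t hk0 ht1 r₀
    -- fiber structure
    have hfib_none : Finset.univ.filter (fun j : Fin N => f j = none) = {j₀} := by
      ext j
      simp only [Finset.mem_filter, Finset.mem_univ, true_and, Finset.mem_singleton, hfdef]
      split
      · simp_all
      · simp_all
    have hfib_some : ∀ r : Fin k, Finset.univ.filter (fun j : Fin N => f j = some r)
        = (Finset.univ.filter (fun j : Fin N => ridx t hk0 j.1 j.2 = r)).erase j₀ := by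
      intro r
      ext j
      simp only [Finset.mem_filter, Finset.mem_univ, true_and, Finset.mem_erase, hfdef]
      split
      · simp_all
      · simp_all [eq_comm]
    have hj0_blk : j₀ ∈ Finset.univ.filter (fun j : Fin N => ridx t hk0 j.1 j.2 = r₀) := by
      simp only [Finset.mem_filter, Finset.mem_univ, true_and]
      exact hr0
    have hfib_card : ∀ r : Fin k,
        (Finset.univ.filter (fun j : Fin N => f j = some r)).card
        = if r = r₀ then t r₀ - 1 else t r := by
      intro r
      rw [hfib_some r]
      by_cases hr : r = r₀
      · subst hr
        rw [if_pos rfl, Finset.card_erase_of_mem hj0_blk]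
        congr 1
        exact card_block t hk0 r₀
      · rw [if_neg hr, Finset.erase_eq_of_notMem, card_block t hk0 r]
        simp only [Finset.mem_filter, Finset.mem_univ, true_and]
        rw [hr0]
        exact fun h => hr h.symm
    -- key sum identity
    have hsum : ∀ m : Fin N → ℕ,
        ∑ j, w j * m j = m j₀ + ∑ r : Fin k, ((r : ℕ) + 1) * φ m r := by
      intro m
      rw [← Finset.sum_fiberwise_of_maps_to (g := f) (t := Finset.univ)
        (fun j _ => Finset.mem_univ _) (fun j => w j * m j)]
      rw [Fintype.sum_option]
      congr 1
      · rw [hfib_none, Finset.sum_singleton]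
        show ((ridx t hk0 j₀.1 j₀.2).1 + 1) * m j₀ = m j₀
        rw [hr0]
        show (0 + 1) * m j₀ = m j₀
        omega
      · apply Finset.sum_congr rfl
        intro r _
        rw [hφdef, Finset.mul_sum]
        apply Finset.sum_congr rfl
        intro j hj
        simp only [Finset.mem_filter, Finset.mem_univ, true_and, hfdef] at hj
        have hrj : ridx t hk0 j.1 j.2 = r := by
          by_cases h : j = j₀
          · simp [h] at hj
          · simp [h] at hj; exact hj
        show ((ridx t hk0 j.1 j.2).1 + 1) * m j = ((r : ℕ) + 1) * m j
        rw [hrj]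
    -- φ of a zero-card fiber is zero
    have hφ_zero : ∀ (m : Fin N → ℕ) (r : Fin k),
        (if r = r₀ then t r₀ - 1 else t r) = 0 → φ m r = 0 := by
      intro m r h
      have hem : Finset.univ.filter (fun j : Fin N => f j = some r) = ∅ := by
        rw [← Finset.card_eq_zero, hfib_card r, h]
      show (∑ j ∈ Finset.univ.filter (fun j => f j = some r), m j) = 0
      rw [hem, Finset.sum_empty]
    -- the index set
    set I := (Fintype.piFinset fun _ : Fin k => Finset.range (L + 1)).filter
            (fun i => (∑ r : Fin k, ((r : ℕ) + 1) * i r) ≤ L ∧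
              (t r₀ = 1 → i r₀ = 0) ∧
              (∀ r : Fin k, r ≠ r₀ → t r = 0 → i r = 0)) with hIdef
    -- D
    set D := ((Fintype.piFinset fun _ : Fin N => Finset.range (ℓ + 1)).filter
        (fun m => ∑ j, w j * m j = L)) with hDdef
    -- maps to I
    have hmaps : ∀ m ∈ D, φ m ∈ I := by
      intro m hm
      rw [hDdef, Finset.mem_filter] at hm
      obtain ⟨hm1, hm2⟩ := hm
      rw [hsum m] at hm2
      have hterm : ∀ r : Fin k, ((r : ℕ) + 1) * φ m r ≤ L := by
        intro r
        have h2 : ((r : ℕ) + 1) * φ m r ≤ ∑ r : Fin k, ((r : ℕ) + 1) * φ m r :=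
          Finset.single_le_sum (f := fun r : Fin k => ((r : ℕ) + 1) * φ m r)
            (fun _ _ => Nat.zero_le _) (Finset.mem_univ r)
        omega
      rw [hIdef, Finset.mem_filter]
      refine ⟨?_, ?_⟩
      · rw [Fintype.mem_piFinset]
        intro r
        rw [Finset.mem_range]
        have h3 := hterm r
        have h1 : φ m r ≤ ((r : ℕ) + 1) * φ m r := Nat.le_mul_of_pos_left _ (by omega)
        omega
      show (∑ r : Fin k, ((r : ℕ) + 1) * φ m r) ≤ L ∧
          (t r₀ = 1 → φ m r₀ = 0) ∧ (∀ r : Fin k, r ≠ r₀ → t r = 0 → φ m r = 0)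
      refine ⟨by omega, ?_, ?_⟩
      · intro h1
        apply hφ_zero m r₀
        rw [if_pos rfl, h1]
      · intro r hr h0
        apply hφ_zero m r
        rw [if_neg hr, h0]
    have hMD : M = D.card := by
      rw [hDdef]
      show ((Fintype.piFinset fun _ : Fin N => Finset.range (ℓ + 1)).filter
        (fun m => ∑ j, ν j * m j = ℓ)).card = _
      apply congrArg Finset.card
      apply Finset.filter_congr
      intro m _
      rw [hfac m, hL]
      constructor
      · intro h; exact Nat.eq_of_mul_eq_mul_left (by omega) h
      · intro h; rw [h]
    rw [hMD, Finset.card_eq_sum_card_fiberwise hmaps]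
    clear hMD
    apply Finset.sum_congr rfl
    intro i hi
    rw [hIdef, Finset.mem_filter] at hi
    have hi0 : i ∈ Fintype.piFinset fun _ : Fin k => Finset.range (L + 1) := hi.1
    have hi2 : (∑ r : Fin k, ((r : ℕ) + 1) * i r) ≤ L := hi.2.1
    have hi3 : t r₀ = 1 → i r₀ = 0 := hi.2.2.1
    have hi4 : ∀ r : Fin k, r ≠ r₀ → t r = 0 → i r = 0 := hi.2.2.2
    have hi1 : ∀ r, i r ≤ L := by
      intro r
      have h2 : i r ∈ Finset.range (L + 1) := Fintype.mem_piFinset.mp hi0 r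
      rw [Finset.mem_range] at h2
      omega
    -- clean description of the fiber
    set S := ∑ r : Fin k, ((r : ℕ) + 1) * i r with hSdef
    set p : Option (Fin k) → ℕ := fun b => b.elim (L - S) i with hpdef
    have hfib_eq : D.filter (fun m => φ m = i)
        = (Fintype.piFinset fun _ : Fin N => Finset.range (ℓ + 1)).filter
            (fun m => ∀ b, ∑ a ∈ Finset.univ.filter (fun a => f a = b), m a = p b) := by
      ext m
      rw [Finset.mem_filter, hDdef, Finset.mem_filter, Finset.mem_filter]
      constructor
      · rintro ⟨⟨hmem, hsumL⟩, hφi⟩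
        refine ⟨hmem, ?_⟩
        intro b
        rcases b with _ | r
        · rw [hfib_none, Finset.sum_singleton]
          have := hsum m
          rw [hφi, ← hSdef, hsumL] at this
          show m j₀ = L - S
          omega
        · show φ m r = i r
          rw [hφi]
      · rintro ⟨hmem, hb⟩
        have hφi : φ m = i := by
          funext r
          exact hb (some r)
        have hj0v : m j₀ = L - S := by
          have := hb none
          rw [hfib_none, Finset.sum_singleton] at this
          exact this
        refine ⟨⟨hmem, ?_⟩, hφi⟩
        rw [hsum m, hφi, ← hSdef, hj0v]
        omega
    rw [hfib_eq, card_partition f ℓ p, Fintype.prod_option]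
    -- evaluate factors
    have hpnone : p none = L - S := rfl
    have hpsome : ∀ r, p (some r) = i r := fun r => rfl
    have hSL : S ≤ L := hi2
    have hfsub : ∀ b, Fintype.card {x // f x = b}
        = (Finset.univ.filter (fun j : Fin N => f j = b)).card := by
      intro b
      rw [Fintype.card_subtype]
    have hfac0 : Nat.multichoose (if r₀ = r₀ then t r₀ - 1 else t r₀) (i r₀)
        = (if t r₀ = 1 then 1 else Nat.choose (i r₀ + t r₀ - 2) (t r₀ - 2)) := by
      rw [if_pos rfl]
      by_cases h1 : t r₀ = 1
      · rw [if_pos h1, h1, hi3 h1]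
        exact Nat.multichoose_zero_right 0
      · have h2 : 2 ≤ t r₀ := by omega
        rw [if_neg h1, Nat.multichoose_eq, show t r₀ - 1 + i r₀ - 1 = i r₀ + t r₀ - 2 by omega]
        have h3 := Nat.choose_symm (n := i r₀ + t r₀ - 2) (k := i r₀) (by omega)
        rw [show i r₀ + t r₀ - 2 - i r₀ = t r₀ - 2 by omega] at h3
        exact h3.symm
    have hfacr : ∀ r ∈ Finset.univ.erase r₀,
        Nat.multichoose (if r = r₀ then t r₀ - 1 else t r) (i r)
        = (if t r = 0 then 1 else Nat.choose (i r + t r - 1) (t r - 1)) := by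
      intro r hr
      rw [if_neg (Finset.mem_erase.mp hr).1]
      by_cases h0 : t r = 0
      · rw [if_pos h0, h0, hi4 r (Finset.mem_erase.mp hr).1 h0]
        exact Nat.multichoose_zero_right 0
      · rw [if_neg h0, Nat.multichoose_eq, show t r + i r - 1 = i r + t r - 1 by omega]
        have h3 := Nat.choose_symm (n := i r + t r - 1) (k := i r) (by omega)
        rw [show i r + t r - 1 - i r = t r - 1 by omega] at h3
        exact h3.symm
    have hfactor_none :
        ((Fintype.piFinset fun _ : {x // f x = none} => Finset.range (ℓ + 1)).filter
          (fun c => ∑ x, c x = p none)).card = 1 := by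
      rw [card_comp' _ (p none) ℓ (by rw [hpnone]; omega)]
      rw [hfsub none, hfib_none, Finset.card_singleton, Nat.multichoose_one]
    have hfactor_some : ∀ r : Fin k,
        ((Fintype.piFinset fun _ : {x // f x = some r} => Finset.range (ℓ + 1)).filter
          (fun c => ∑ x, c x = p (some r))).card
        = Nat.multichoose (if r = r₀ then t r₀ - 1 else t r) (i r) := by
      intro r
      rw [card_comp' _ (p (some r)) ℓ (by rw [hpsome]; exact le_trans (hi1 r) hLl)]
      rw [hfsub (some r), hfib_card r, hpsome]
    rw [hfactor_none, Nat.one_mul,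
      Finset.prod_congr rfl (fun r _ => hfactor_some r),
      ← Finset.mul_prod_erase Finset.univ _ (Finset.mem_univ r₀),
      hfac0, Finset.prod_congr rfl hfacr]
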